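/- Suppose d ∈ [0,1), ω ∈ ℝ, g ≠ 0, κ, γ > 0, and C_b = g² d/(κγ) < 1. Let (A, S, D) be a solution of the Maxwell–Bloch equations on [0,∞). Then for every t ≥ 0, |S(t)|² + (D(t) − d)²/4 ≤ exp( −(1 − C_b)·min{κ, γ}·t ) · ( (4κd/γ)|A(0)|² + (4κ/γ + 1)|S(0)|² + (κ/γ + 1/4)(D(0) − d)² ). -/

import Mathlib

open Set Filter Topology

private lemma myCongr {f : ℝ → ℝ} {a b x : ℝ} (h : HasDerivAt f a x) (e : a = b) :
    HasDerivAt f b x := e ▸ h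

/-- First-crossing comparison lemma: if `ψ 0 < 0` and `ψ` has a strictly negative
derivative at any nonnegative zero, then `ψ` stays negative on `[0, ∞)`. -/
private lemma first_crossing {ψ dψ : ℝ → ℝ}
    (hd : ∀ t, 0 ≤ t → HasDerivAt ψ (dψ t) t)
    (h0 : ψ 0 < 0)
    (hc : ∀ t, 0 < t → ψ t = 0 → dψ t < 0) :
    ∀ t, 0 ≤ t → ψ t < 0 := by
  intro t ht
  by_contra hcon
  push_neg at hcon
  have hne : ({x : ℝ | 0 ≤ x ∧ 0 ≤ ψ x}).Nonempty := ⟨t, ht, hcon⟩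
  have hbdd : BddBelow {x : ℝ | 0 ≤ x ∧ 0 ≤ ψ x} := ⟨0, fun x hx => hx.1⟩
  have hcl : IsClosed {x : ℝ | 0 ≤ x ∧ 0 ≤ ψ x} := by
    have hset : {x : ℝ | 0 ≤ x ∧ 0 ≤ ψ x} = Ici 0 ∩ ψ ⁻¹' (Ici 0) := by
      ext x
      simp [Set.mem_setOf_eq, Set.mem_inter_iff, Set.mem_preimage, Set.mem_Ici]
    rw [hset]
    exact ContinuousOn.preimage_isClosed_of_isClosed
      (fun x hx => ((hd x hx).continuousAt).continuousWithinAt) isClosed_Ici isClosed_Ici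
  set T := sInf {x : ℝ | 0 ≤ x ∧ 0 ≤ ψ x} with hTdef
  have hTmem : T ∈ {x : ℝ | 0 ≤ x ∧ 0 ≤ ψ x} := hcl.csInf_mem hne hbdd
  have hT0 : 0 ≤ T := hTmem.1
  have hTψ : 0 ≤ ψ T := hTmem.2
  have hTpos : 0 < T := by
    rcases lt_or_eq_of_le hT0 with h | h
    · exact h
    · exfalso; rw [← h] at hTψ; linarith
  have hlow : ∀ x, 0 ≤ x → x < T → ψ x < 0 := by
    intro x hx hxT
    by_contra hcx
    push_neg at hcx
    exact absurd (csInf_le hbdd ⟨hx, hcx⟩) (not_le.2 hxT)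
  have hψTle : ψ T ≤ 0 := by
    have hlim : Tendsto ψ (𝓝[<] T) (𝓝 (ψ T)) :=
      ((hd T hT0).continuousAt).continuousWithinAt
    refine le_of_tendsto hlim ?_
    filter_upwards [Ioo_mem_nhdsLT_of_mem (show T ∈ Ioc 0 T from ⟨hTpos, le_refl T⟩)] with x hx
    exact (hlow x hx.1.le hx.2).le
  have hψT : ψ T = 0 := le_antisymm hψTle hTψ
  have hdT : dψ T < 0 := hc T hTpos hψT
  have hslope : Tendsto (slope ψ T) (𝓝[<] T) (𝓝 (dψ T)) :=
    (hasDerivAt_iff_tendsto_slope.mp (hd T hT0)).mono_left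
      (nhdsWithin_mono T (fun x hx => ne_of_lt hx))
  have e0 : ∀ᶠ y in 𝓝 (dψ T), y < 0 := by
    filter_upwards [Iio_mem_nhds hdT] with y hy; exact hy
  have e1 : ∀ᶠ x in 𝓝[<] T, slope ψ T x < 0 := hslope.eventually e0
  have e2 : ∀ᶠ x in 𝓝[<] T, x ∈ Ioo 0 T := by
    filter_upwards [Ioo_mem_nhdsLT_of_mem (show T ∈ Ioc 0 T from ⟨hTpos, le_refl T⟩)] with x hx
    exact hx
  obtain ⟨x, hx1, hx2⟩ := (e1.and e2).exists
  have hψx : ψ x < 0 := hlow x hx2.1.le hx2.2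
  have hsl : slope ψ T x = ψ x / (x - T) := by
    rw [slope_def_field, hψT, sub_zero]
  rw [hsl] at hx1
  have hxT : x - T < 0 := by linarith [hx2.2]
  rcases div_neg_iff.mp hx1 with ⟨h1, h2⟩ | ⟨h1, h2⟩
  · linarith
  · linarith

set_option maxHeartbeats 1600000 in
/-- Abstract decay lemma for the Maxwell–Bloch Lyapunov structure. -/
private lemma decay_aux (g d κ γ L : ℝ) (u v ee w G r : ℝ → ℝ)
    (hκ : 0 < κ) (hγ : 0 < γ) (hd0 : 0 ≤ d)
    (hL0 : 0 < L) (hLγ : L ≤ γ)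
    (h2κ : 0 < 2 * κ - L) (h2γ : 0 < 2 * γ - L)
    (hq : 4 * (g ^ 2 * d) ≤ (2 * κ - L) * (2 * γ - L))
    (hs : g ^ 2 * d ≤ κ * γ)
    (hu : ∀ t, 0 ≤ u t) (hv : ∀ t, 0 ≤ v t) (hee : ∀ t, 0 ≤ ee t)
    (hwdef : ∀ t, w t = v t + ee t / 4) (hGdef : ∀ t, G t = d * u t + w t)
    (hr : ∀ t, (r t) ^ 2 ≤ u t * v t)
    (hw' : ∀ t, 0 ≤ t → HasDerivAt w (-(2 * γ) * v t - γ * ee t + 2 * g * d * r t) t)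
    (hG' : ∀ t, 0 ≤ t →
      HasDerivAt G (-(2 * κ) * (d * u t) - 2 * γ * v t - γ * ee t + 4 * g * d * r t) t) :
    ∀ t, 0 ≤ t → w t ≤ Real.exp (-(L * t)) * (w 0 + 4 * κ / γ * G 0) := by
  -- Step 1: Grönwall for G : exp (L t) * G t is antitone on [0,∞)
  have hFder : ∀ T, 0 ≤ T → HasDerivAt (fun τ => Real.exp (L * τ) * G τ)
      ((Real.exp (L * T) * (L * 1)) * G T +
        Real.exp (L * T) * (-(2 * κ) * (d * u T) - 2 * γ * v T - γ * ee T + 4 * g * d * r T)) T :=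
    fun T hT => (((hasDerivAt_id' (x := T)).const_mul L).exp).mul (hG' T hT)
  have hcross : ∀ x : ℝ, 4 * g * d * r x ≤ (2 * κ - L) * (d * u x) + (2 * γ - L) * v x := by
    intro x
    have hN : 0 ≤ (2 * κ - L) * (d * u x) + (2 * γ - L) * v x :=
      add_nonneg (mul_nonneg h2κ.le (mul_nonneg hd0 (hu x))) (mul_nonneg h2γ.le (hv x))
    refine le_of_pow_le_pow_left₀ (n := 2) (by norm_num) hN ?_
    nlinarith [hr x, hq, sq_nonneg ((2 * κ - L) * (d * u x) - (2 * γ - L) * v x),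
      mul_nonneg (mul_nonneg hd0 (hu x)) (hv x), sq_nonneg (g * d),
      mul_nonneg hd0 (hu x), hv x, hu x]
  have hanti : AntitoneOn (fun τ => Real.exp (L * τ) * G τ) (Ici 0) := by
    apply antitoneOn_of_deriv_nonpos (convex_Ici 0)
    · exact fun x hx => ((hFder x hx).continuousAt).continuousWithinAt
    · intro x hx
      rw [interior_Ici] at hx
      exact ((hFder x hx.le).differentiableAt).differentiableWithinAt
    · intro x hx
      rw [interior_Ici] at hx
      rw [(hFder x hx.le).deriv]
      have hGx : G x = d * u x + (v x + ee x / 4) := by rw [hGdef, hwdef]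
      have hee4 : 0 ≤ (γ - L / 4) * ee x := mul_nonneg (by linarith) (hee x)
      have hmain : L * (G x) +
          (-(2 * κ) * (d * u x) - 2 * γ * v x - γ * ee x + 4 * g * d * r x) ≤ 0 := by
        rw [hGx]; linarith [hcross x]
      have hexp := (Real.exp_pos (L * x)).le
      nlinarith [mul_le_mul_of_nonneg_left hmain hexp]
  have hGle : ∀ T, 0 ≤ T → Real.exp (L * T) * G T ≤ G 0 := by
    intro T hT
    have h := hanti (self_mem_Ici) (mem_Ici.mpr hT) hT
    simpa using h
  -- Step 2: comparison for w
  intro t ht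
  have hw0 : 0 ≤ w 0 := by rw [hwdef]; linarith [hv 0, hee 0]
  have hG0 : 0 ≤ G 0 := by rw [hGdef]; linarith [mul_nonneg hd0 (hu 0), hv 0, hee 0,
    (hwdef 0).ge, hw0]
  have hkγ : 0 ≤ 4 * κ / γ := div_nonneg (by linarith) hγ.le
  have keyε : ∀ ε, 0 < ε → w t < Real.exp (-(L * t)) * (w 0 + 4 * κ / γ * G 0 + ε) := by
    intro ε hε
    set c := w 0 + 4 * κ / γ * G 0 + ε with hcdef
    have hc0 : 0 < c := by
      have := mul_nonneg hkγ hG0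
      rw [hcdef]; linarith
    have hψ := first_crossing (ψ := fun τ => w τ - Real.exp (-(L * τ)) * c)
      (dψ := fun τ => (-(2 * γ) * v τ - γ * ee τ + 2 * g * d * r τ) +
        L * (Real.exp (-(L * τ)) * c)) ?_ ?_ ?_
    · have h := hψ t ht
      linarith
    · intro τ hτ
      exact myCongr ((hw' τ hτ).sub
        (((((hasDerivAt_id' (x := τ)).const_mul L).neg).exp).mul_const c)) (by simp only [Pi.neg_apply]; ring)
    · simp only [mul_zero, neg_zero, Real.exp_zero, one_mul]
      have := mul_nonneg hkγ hG0
      rw [hcdef]; linarith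
    · intro T hTpos hψT0
      have hT : 0 ≤ T := hTpos.le
      have hE := Real.exp_pos (-(L * T))
      have hwT : w T = Real.exp (-(L * T)) * c := by linarith [sub_eq_zero.mp hψT0]
      have hGT : G T ≤ Real.exp (-(L * T)) * G 0 := by
        have h1 := hGle T hT
        have h2 := mul_le_mul_of_nonneg_left h1 hE.le
        have h3 : Real.exp (-(L * T)) * (Real.exp (L * T) * G T) = G T := by
          rw [← mul_assoc, ← Real.exp_add, neg_add_cancel, Real.exp_zero, one_mul]
        rwa [h3] at h2
      have hwT0 : 0 ≤ w T := by rw [hwdef]; linarith [hv T, hee T]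
      have hGT0 : 0 ≤ G T := by rw [hGdef]; linarith [mul_nonneg hd0 (hu T), hwT0]
      have hduG : d * u T ≤ G T := by rw [hGdef]; linarith
      have hvwT : v T ≤ w T := by rw [hwdef]; linarith [hee T]
      have h4gd : (0 : ℝ) ≤ 4 * (g ^ 2 * d) := by positivity
      have h4gdd : (0 : ℝ) ≤ 4 * (g ^ 2 * d) * d := by positivity
      have hrs : (2 * g * d * r T) ^ 2 ≤ 4 * (g ^ 2 * d) * (G T * w T) := by
        have e1 : d * u T * v T ≤ G T * w T := mul_le_mul hduG hvwT (hv T) hGT0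
        have e2 := mul_le_mul_of_nonneg_left e1 h4gd
        have e3 := mul_le_mul_of_nonneg_left (hr T) h4gdd
        nlinarith [e2, e3]
      have hrhs_scalar : 4 * (g ^ 2 * d) * G 0 < (2 * γ - L) ^ 2 * c := by
        have hA1 : γ ^ 2 ≤ (2 * γ - L) ^ 2 := by nlinarith
        have hfe2 : γ ^ 2 * (4 * κ / γ * G 0) = 4 * (κ * γ) * G 0 := by
          field_simp
        have hsmall : 4 * (g ^ 2 * d) * G 0 ≤ 4 * (κ * γ) * G 0 := by nlinarith
        have hγε : 0 < γ ^ 2 * ε := by positivity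
        have hγw : 0 ≤ γ ^ 2 * w 0 := by positivity
        have hstep : 4 * (g ^ 2 * d) * G 0 < γ ^ 2 * c := by
          rw [hcdef]; nlinarith
        nlinarith [mul_le_mul_of_nonneg_right hA1 hc0.le]
      have hrhs : 4 * (g ^ 2 * d) * (G T * w T) <
          ((2 * γ - L) * (Real.exp (-(L * T)) * c)) ^ 2 := by
        rw [hwT]
        have e4 : G T * (Real.exp (-(L * T)) * c) ≤
            (Real.exp (-(L * T)) * G 0) * (Real.exp (-(L * T)) * c) :=
          mul_le_mul_of_nonneg_right hGT (mul_nonneg hE.le hc0.le)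
        have e5 := mul_le_mul_of_nonneg_left e4 h4gd
        have e6 : (4 * (g ^ 2 * d) * G 0) * (Real.exp (-(L * T)) * Real.exp (-(L * T)) * c) <
            ((2 * γ - L) ^ 2 * c) * (Real.exp (-(L * T)) * Real.exp (-(L * T)) * c) :=
          mul_lt_mul_of_pos_right hrhs_scalar (by positivity)
        nlinarith [e5, e6]
      have hcross2 : 2 * g * d * r T < (2 * γ - L) * (Real.exp (-(L * T)) * c) := by
        have hRnn : 0 ≤ (2 * γ - L) * (Real.exp (-(L * T)) * c) :=
          mul_nonneg h2γ.le (mul_nonneg hE.le hc0.le)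
        exact lt_of_pow_lt_pow_left₀ 2 hRnn (lt_of_le_of_lt hrs hrhs)
      have hwe : 0 ≤ γ * ee T := mul_nonneg hγ.le (hee T)
      have hwexp : -(2 * γ) * v T - γ * ee T ≤ -(2 * γ) * w T := by
        rw [hwdef]; nlinarith
      rw [hwT] at hwexp
      linarith
  -- Step 3: take ε → 0
  by_contra hfail
  push_neg at hfail
  set B := Real.exp (-(L * t)) * (w 0 + 4 * κ / γ * G 0) with hBdef
  have hδ : 0 < (w t - B) * Real.exp (L * t) :=
    mul_pos (by linarith) (Real.exp_pos _)
  have h1 := keyε ((w t - B) * Real.exp (L * t)) hδ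
  have h2 : Real.exp (-(L * t)) * Real.exp (L * t) = 1 := by
    rw [← Real.exp_add, neg_add_cancel, Real.exp_zero]
  have h3 : Real.exp (-(L * t)) * (w 0 + 4 * κ / γ * G 0 + (w t - B) * Real.exp (L * t)) =
      B + (w t - B) := by
    rw [hBdef]; linear_combination (w t - Real.exp (-(L * t)) * (w 0 + 4 * κ / γ * G 0)) * h2
  rw [h3] at h1
  linarith

set_option maxHeartbeats 1600000 in
theorem maxwell_bloch_decay_of_Cb_lt_one
    (ω g κ γ d : ℝ) (hg : g ≠ 0) (hκ : 0 < κ) (hγ : 0 < γ)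
    (hd0 : 0 ≤ d) (hd1 : d < 1)
    (hCb : g ^ 2 * d / (κ * γ) < 1)
    (A S : ℝ → ℂ) (D : ℝ → ℝ)
    (hA : ∀ t ≥ (0 : ℝ),
      HasDerivAt A (-((κ : ℂ) + (ω : ℂ) * Complex.I) * A t + (g : ℂ) * S t) t)
    (hS : ∀ t ≥ (0 : ℝ),
      HasDerivAt S (-((γ : ℂ) + (ω : ℂ) * Complex.I) * S t + (g : ℂ) * A t * (D t : ℂ)) t)
    (hD : ∀ t ≥ (0 : ℝ),
      HasDerivAt D (-4 * g * ((starRingEnd ℂ) (A t) * S t).re - 2 * γ * (D t - d)) t) :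
    ∀ t ≥ (0 : ℝ),
      ‖S t‖ ^ 2 + (D t - d) ^ 2 / 4 ≤
        Real.exp (-(1 - g ^ 2 * d / (κ * γ)) * min κ γ * t) *
          (4 * κ * d / γ * ‖A 0‖ ^ 2 + (4 * κ / γ + 1) * ‖S 0‖ ^ 2 +
            (κ / γ + 1 / 4) * (D 0 - d) ^ 2) := by
  intro t ht
  have hκγ : (0 : ℝ) < κ * γ := mul_pos hκ hγ
  set s : ℝ := g ^ 2 * d / (κ * γ) with hsdef
  have hs0 : 0 ≤ s := by rw [hsdef]; positivity
  have hs1 : s < 1 := hCb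
  have hgd : g ^ 2 * d = s * (κ * γ) := by rw [hsdef]; field_simp
  set L : ℝ := (1 - s) * min κ γ with hLdef
  have hmin : 0 < min κ γ := lt_min hκ hγ
  have hL0 : 0 < L := by rw [hLdef]; exact mul_pos (by linarith) hmin
  have hLκ : L ≤ (1 - s) * κ := mul_le_mul_of_nonneg_left (min_le_left κ γ) (by linarith)
  have hLγ : L ≤ (1 - s) * γ := mul_le_mul_of_nonneg_left (min_le_right κ γ) (by linarith)
  have hLγ' : L ≤ γ := by nlinarith [mul_nonneg hs0 hγ.le]
  have h2κL : (1 + s) * κ ≤ 2 * κ - L := by nlinarith [mul_nonneg hs0 hκ.le]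
  have h2γL : (1 + s) * γ ≤ 2 * γ - L := by nlinarith [mul_nonneg hs0 hγ.le]
  have h2κLpos : 0 < 2 * κ - L := lt_of_lt_of_le (by nlinarith) h2κL
  have h2γLpos : 0 < 2 * γ - L := lt_of_lt_of_le (by nlinarith) h2γL
  have key1 : 4 * (g ^ 2 * d) ≤ (2 * κ - L) * (2 * γ - L) := by
    have h3 : ((1 + s) * κ) * ((1 + s) * γ) ≤ (2 * κ - L) * (2 * γ - L) :=
      mul_le_mul h2κL h2γL (by positivity) (by linarith)
    nlinarith [mul_pos hκ hγ, sq_nonneg (1 - s)]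
  have hsle : g ^ 2 * d ≤ κ * γ := by nlinarith
  -- component derivatives
  have hare : ∀ T, 0 ≤ T → HasDerivAt (fun τ => (A τ).re)
      (-(κ * (A T).re) + ω * (A T).im + g * (S T).re) T := by
    intro T hT
    have h := (Complex.reCLM.hasFDerivAt (x := A T)).comp_hasDerivAt T (hA T hT)
    simp only [Function.comp_def, Complex.reCLM_apply] at h
    refine myCongr h ?_
    simp only [Complex.add_re, Complex.neg_re, Complex.mul_re, Complex.mul_im,
      Complex.add_im, Complex.neg_im, Complex.ofReal_re, Complex.ofReal_im,
      Complex.I_re, Complex.I_im]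
    ring
  have haim : ∀ T, 0 ≤ T → HasDerivAt (fun τ => (A τ).im)
      (-(κ * (A T).im) - ω * (A T).re + g * (S T).im) T := by
    intro T hT
    have h := (Complex.imCLM.hasFDerivAt (x := A T)).comp_hasDerivAt T (hA T hT)
    simp only [Function.comp_def, Complex.imCLM_apply] at h
    refine myCongr h ?_
    simp only [Complex.add_re, Complex.neg_re, Complex.mul_re, Complex.mul_im,
      Complex.add_im, Complex.neg_im, Complex.ofReal_re, Complex.ofReal_im,
      Complex.I_re, Complex.I_im]
    ring
  have hsre : ∀ T, 0 ≤ T → HasDerivAt (fun τ => (S τ).re)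
      (-(γ * (S T).re) + ω * (S T).im + g * ((A T).re * D T)) T := by
    intro T hT
    have h := (Complex.reCLM.hasFDerivAt (x := S T)).comp_hasDerivAt T (hS T hT)
    simp only [Function.comp_def, Complex.reCLM_apply] at h
    refine myCongr h ?_
    simp only [Complex.add_re, Complex.neg_re, Complex.mul_re, Complex.mul_im,
      Complex.add_im, Complex.neg_im, Complex.ofReal_re, Complex.ofReal_im,
      Complex.I_re, Complex.I_im]
    ring
  have hsim : ∀ T, 0 ≤ T → HasDerivAt (fun τ => (S τ).im)
      (-(γ * (S T).im) - ω * (S T).re + g * ((A T).im * D T)) T := by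
    intro T hT
    have h := (Complex.imCLM.hasFDerivAt (x := S T)).comp_hasDerivAt T (hS T hT)
    simp only [Function.comp_def, Complex.imCLM_apply] at h
    refine myCongr h ?_
    simp only [Complex.add_re, Complex.neg_re, Complex.mul_re, Complex.mul_im,
      Complex.add_im, Complex.neg_im, Complex.ofReal_re, Complex.ofReal_im,
      Complex.I_re, Complex.I_im]
    ring
  -- combined derivatives
  have hw' : ∀ T, 0 ≤ T → HasDerivAt
      (fun τ => ((S τ).re * (S τ).re + (S τ).im * (S τ).im) + ((D τ - d) * (D τ - d)) / 4)
      (-(2 * γ) * ((S T).re * (S T).re + (S T).im * (S T).im) - γ * ((D T - d) * (D T - d)) +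
        2 * g * d * ((A T).re * (S T).re + (A T).im * (S T).im)) T := by
    intro T hT
    have h := (((hsre T hT).mul (hsre T hT)).add ((hsim T hT).mul (hsim T hT))).add
      ((((hD T hT).sub_const d).mul ((hD T hT).sub_const d)).div_const 4)
    refine myCongr h ?_
    simp only [Complex.mul_re, Complex.conj_re, Complex.conj_im]
    ring
  have hG' : ∀ T, 0 ≤ T → HasDerivAt
      (fun τ => d * ((A τ).re * (A τ).re + (A τ).im * (A τ).im) +
        (((S τ).re * (S τ).re + (S τ).im * (S τ).im) + ((D τ - d) * (D τ - d)) / 4))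
      (-(2 * κ) * (d * ((A T).re * (A T).re + (A T).im * (A T).im)) -
        2 * γ * ((S T).re * (S T).re + (S T).im * (S T).im) - γ * ((D T - d) * (D T - d)) +
        4 * g * d * ((A T).re * (S T).re + (A T).im * (S T).im)) T := by
    intro T hT
    have h := ((((hare T hT).mul (hare T hT)).add ((haim T hT).mul (haim T hT))).const_mul d).add
      (hw' T hT)
    refine myCongr h ?_
    ring
  have haux := decay_aux g d κ γ L
    (fun τ => (A τ).re * (A τ).re + (A τ).im * (A τ).im)
    (fun τ => (S τ).re * (S τ).re + (S τ).im * (S τ).im)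
    (fun τ => (D τ - d) * (D τ - d))
    (fun τ => ((S τ).re * (S τ).re + (S τ).im * (S τ).im) + ((D τ - d) * (D τ - d)) / 4)
    (fun τ => d * ((A τ).re * (A τ).re + (A τ).im * (A τ).im) +
      (((S τ).re * (S τ).re + (S τ).im * (S τ).im) + ((D τ - d) * (D τ - d)) / 4))
    (fun τ => (A τ).re * (S τ).re + (A τ).im * (S τ).im)
    hκ hγ hd0 hL0 hLγ' h2κLpos h2γLpos key1 hsle
    (fun τ => add_nonneg (mul_self_nonneg _) (mul_self_nonneg _))
    (fun τ => add_nonneg (mul_self_nonneg _) (mul_self_nonneg _))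
    (fun τ => mul_self_nonneg _)
    (fun τ => rfl) (fun τ => rfl)
    (fun τ => by
      show ((A τ).re * (S τ).re + (A τ).im * (S τ).im) ^ 2 ≤
        ((A τ).re * (A τ).re + (A τ).im * (A τ).im) *
          ((S τ).re * (S τ).re + (S τ).im * (S τ).im)
      nlinarith [sq_nonneg ((A τ).re * (S τ).im - (A τ).im * (S τ).re)])
    hw' hG'
  have hfinal := haux t ht
  have habsS : ‖S t‖ ^ 2 = (S t).re * (S t).re + (S t).im * (S t).im := by
    rw [Complex.sq_norm, Complex.normSq_apply]
  have habsS0 : ‖S 0‖ ^ 2 = (S 0).re * (S 0).re + (S 0).im * (S 0).im := by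
    rw [Complex.sq_norm, Complex.normSq_apply]
  have habsA0 : ‖A 0‖ ^ 2 = (A 0).re * (A 0).re + (A 0).im * (A 0).im := by
    rw [Complex.sq_norm, Complex.normSq_apply]
  rw [habsS, habsS0, habsA0]
  have harg : Real.exp (-(1 - s) * min κ γ * t) = Real.exp (-(L * t)) := by
    rw [hLdef]; ring_nf
  rw [harg]
  have hbr : 4 * κ * d / γ * ((A 0).re * (A 0).re + (A 0).im * (A 0).im) +
      (4 * κ / γ + 1) * ((S 0).re * (S 0).re + (S 0).im * (S 0).im) +
      (κ / γ + 1 / 4) * (D 0 - d) ^ 2 =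
      (((S 0).re * (S 0).re + (S 0).im * (S 0).im) + ((D 0 - d) * (D 0 - d)) / 4) +
        4 * κ / γ * (d * ((A 0).re * (A 0).re + (A 0).im * (A 0).im) +
          (((S 0).re * (S 0).re + (S 0).im * (S 0).im) + ((D 0 - d) * (D 0 - d)) / 4)) := by
    field_simp
    ring
  rw [hbr]
  nlinarith [hfinal]
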